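/- For all x ≥ 0, h₂(x) ≥ h₅(x) ≥ h₄(x), where h₂(x) = (1+x)log(1+x) − x, h₄(x) = (x/2)·arcsinh(x/2), and h₅(x) = x·arcsinh(x/2) − 2(cosh(arcsinh(x/2)) − 1). -/

import Mathlib

open Real

lemma mono_aux {F φ : ℝ → ℝ} (hc : ContinuousOn F (Set.Ici (0:ℝ)))
    (hF : ∀ x, 0 < x → HasDerivAt F (φ x) x)
    (hφ : ∀ x, 0 < x → 0 ≤ φ x) {x : ℝ} (hx : 0 ≤ x) : F 0 ≤ F x := by
  have hmono : MonotoneOn F (Set.Ici (0:ℝ)) := by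
    apply monotoneOn_of_deriv_nonneg (convex_Ici 0) hc
    · intro y hy
      rw [interior_Ici] at hy
      exact ((hF y hy).differentiableAt).differentiableWithinAt
    · intro y hy
      rw [interior_Ici] at hy
      rw [(hF y hy).deriv]
      exact hφ y hy
  exact hmono Set.self_mem_Ici hx hx

lemma sqrt_pos' (t : ℝ) : 0 < Real.sqrt (1 + t ^ 2) := by
  apply Real.sqrt_pos.2; positivity

lemma key2 {t : ℝ} (ht : 0 ≤ t) : t / Real.sqrt (1 + t ^ 2) ≤ Real.arsinh t := by
  have h := mono_aux (F := fun t => Real.arsinh t - t / Real.sqrt (1 + t ^ 2))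
    (φ := fun t => (Real.sqrt (1 + t ^ 2))⁻¹ -
      ((Real.sqrt (1 + t ^ 2))⁻¹ - t ^ 2 / (Real.sqrt (1 + t ^ 2)) ^ 3))
    ?_ ?_ ?_ ht
  · simpa using h
  · apply ContinuousOn.sub Real.continuous_arsinh.continuousOn
    exact ContinuousOn.div continuous_id.continuousOn
      (Continuous.continuousOn (by continuity))
      (fun y _ => (sqrt_pos' y).ne')
  · intro y _
    have hs := sqrt_pos' y
    have base := (Real.hasDerivAt_arsinh y).sub
      ((hasDerivAt_id y).div (((hasDerivAt_pow 2 y).const_add 1).sqrt (by positivity)) hs.ne')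
    refine base.congr_deriv ?_
    have hsq : Real.sqrt (1 + y ^ 2) ^ 2 = 1 + y ^ 2 := Real.sq_sqrt (by positivity)
    simp only [id]
    field_simp
    ring
  · intro y _
    have hs := sqrt_pos' y
    have e : (Real.sqrt (1 + y ^ 2))⁻¹ -
        ((Real.sqrt (1 + y ^ 2))⁻¹ - y ^ 2 / (Real.sqrt (1 + y ^ 2)) ^ 3)
        = y ^ 2 / (Real.sqrt (1 + y ^ 2)) ^ 3 := by ring
    show 0 ≤ (Real.sqrt (1 + y ^ 2))⁻¹ -
      ((Real.sqrt (1 + y ^ 2))⁻¹ - y ^ 2 / (Real.sqrt (1 + y ^ 2)) ^ 3)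
    rw [e]; positivity

lemma key1 {x : ℝ} (hx : 0 ≤ x) : Real.arsinh (x / 2) ≤ Real.log (1 + x) := by
  rw [Real.arsinh]
  apply Real.log_le_log (by positivity)
  have h : Real.sqrt (1 + (x / 2) ^ 2) ≤ 1 + x / 2 := by
    rw [show (1:ℝ) + x/2 = Real.sqrt ((1 + x/2)^2) from (Real.sqrt_sq (by positivity)).symm]
    apply Real.sqrt_le_sqrt; nlinarith
  nlinarith [h]

lemma hasDerivAt_h5 (y : ℝ) :
    HasDerivAt (fun x => x * Real.arsinh (x / 2) - 2 * (Real.cosh (Real.arsinh (x / 2)) - 1))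
      (Real.arsinh (y / 2)) y := by
  have hs := sqrt_pos' (y/2)
  have h1 : HasDerivAt (fun x : ℝ => x / 2) (1/2) y := (hasDerivAt_id y).div_const 2
  have harc : HasDerivAt (fun x => Real.arsinh (x / 2))
      ((Real.sqrt (1 + (y/2) ^ 2))⁻¹ * (1/2)) y :=
    by have := (Real.hasDerivAt_arsinh (y/2)).comp y h1; exact this
  have hpow : HasDerivAt (fun x : ℝ => 1 + (x/2) ^ 2) ((2:ℕ) * (y/2) ^ 1 * (1/2)) y :=
    by have := (((hasDerivAt_pow 2 (y/2)).comp y h1)).const_add 1; exact this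
  have hsq : HasDerivAt (fun x : ℝ => Real.sqrt (1 + (x/2) ^ 2))
      (((2:ℕ) * (y/2) ^ 1 * (1/2)) / (2 * Real.sqrt (1 + (y/2) ^ 2))) y :=
    hpow.sqrt (by positivity)
  have hcosh : (fun x => x * Real.arsinh (x / 2) - 2 * (Real.cosh (Real.arsinh (x / 2)) - 1))
      = (fun x => x * Real.arsinh (x / 2) - 2 * (Real.sqrt (1 + (x/2) ^ 2) - 1)) := by
    funext x; rw [Real.cosh_arsinh]
  rw [hcosh]
  have H := ((hasDerivAt_id y).mul harc).sub ((hsq.sub_const 1).const_mul 2)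
  refine H.congr_deriv ?_
  have hsqv : Real.sqrt (1 + (y/2) ^ 2) ^ 2 = 1 + (y/2) ^ 2 := Real.sq_sqrt (by positivity)
  simp only [id]
  push_cast
  field_simp
  ring

lemma hasDerivAt_h4 (y : ℝ) :
    HasDerivAt (fun x => (x / 2) * Real.arsinh (x / 2))
      ((1/2) * Real.arsinh (y/2) + (y/2) * ((Real.sqrt (1 + (y/2) ^ 2))⁻¹ * (1/2))) y := by
  have h1 : HasDerivAt (fun x : ℝ => x / 2) (1/2) y := (hasDerivAt_id y).div_const 2
  have := h1.mul ((Real.hasDerivAt_arsinh (y/2)).comp y h1)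
  exact this

noncomputable def h₂ (x : ℝ) : ℝ := (1 + x) * Real.log (1 + x) - x
noncomputable def h₄ (x : ℝ) : ℝ := (x / 2) * Real.arsinh (x / 2)
noncomputable def h₅ (x : ℝ) : ℝ :=
  x * Real.arsinh (x / 2) - 2 * (Real.cosh (Real.arsinh (x / 2)) - 1)

theorem h2_ge_h5_ge_h4 (x : ℝ) (hx : 0 ≤ x) :
    h₂ x ≥ h₅ x ∧ h₅ x ≥ h₄ x := by
  constructor
  · have h := mono_aux (F := fun x => h₂ x - h₅ x)
      (φ := fun x => Real.log (1 + x) - Real.arsinh (x / 2)) ?_ ?_ ?_ hx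
    · simp only [h₂, h₅, Real.cosh_arsinh] at h ⊢
      rw [ge_iff_le]
      simp at h
      linarith [h]
    · apply ContinuousOn.sub
      · apply ContinuousOn.sub
        · apply ContinuousOn.mul (continuous_const.add continuous_id).continuousOn
          apply ContinuousOn.log (continuous_const.add continuous_id).continuousOn
          intro y hy
          simp only [Set.mem_Ici] at hy
          simp only [Pi.add_apply, id]
          positivity
        · exact continuous_id.continuousOn
      · apply Continuous.continuousOn
        unfold h₅
        have : Continuous (fun x : ℝ => Real.arsinh (x/2)) :=
          Real.continuous_arsinh.comp (by continuity)
        continuity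
    · intro y hy
      have hlog : HasDerivAt (fun x : ℝ => (1 + x) * Real.log (1 + x) - x)
          (Real.log (1 + y)) y := by
        have hl : HasDerivAt (fun x : ℝ => Real.log (1 + x)) (1/(1+y)) y := by
          have := (Real.hasDerivAt_log (by positivity : (1:ℝ)+y ≠ 0)).comp y
            ((hasDerivAt_id y).const_add 1)
          simpa [one_div, Function.comp_def] using this
        have := (((hasDerivAt_id y).const_add 1).mul hl).sub (hasDerivAt_id y)
        refine this.congr_deriv ?_
        simp only [id]
        field_simp
        ring
      have := hlog.sub (hasDerivAt_h5 y)
      simp only [h₂, h₅]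
      exact this
    · intro y hy; linarith [key1 hy.le]
  · have h := mono_aux (F := fun x => h₅ x - h₄ x)
      (φ := fun x => Real.arsinh (x / 2) -
        ((1/2) * Real.arsinh (x/2) + (x/2) * ((Real.sqrt (1 + (x/2) ^ 2))⁻¹ * (1/2)))) ?_ ?_ ?_ hx
    · simp only [h₄, h₅, Real.cosh_arsinh] at h ⊢
      rw [ge_iff_le]
      simp at h
      linarith [h]
    · apply Continuous.continuousOn
      have harc : Continuous (fun x : ℝ => Real.arsinh (x/2)) :=
        Real.continuous_arsinh.comp (by continuity)
      unfold h₅ h₄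
      continuity
    · intro y hy
      simp only [h₄, h₅]
      exact (hasDerivAt_h5 y).sub (hasDerivAt_h4 y)
    · intro y hy
      show 0 ≤ Real.arsinh (y / 2) -
        ((1/2) * Real.arsinh (y/2) + (y/2) * ((Real.sqrt (1 + (y/2) ^ 2))⁻¹ * (1/2)))
      have hk := key2 (t := y/2) (by linarith)
      have hs := sqrt_pos' (y/2)
      have e : (y/2) * ((Real.sqrt (1 + (y/2) ^ 2))⁻¹ * (1/2))
          = ((y/2) / Real.sqrt (1 + (y/2) ^ 2)) * (1/2) := by
        rw [div_eq_mul_inv]; ring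
      rw [e]
      nlinarith [hk]
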